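/- Let 1 < p < ∞, s ∈ [0,1], and f locally integrable on ℝ^N. Define the restricted sharp fractional maximal function f^#_{R,s}(x) = sup_{0<r<R} r^{−s−N} ∫_{B(x,r)} |f(y) − (f)_{B(x,r)}| dy. Then ‖f^#_s‖_{L^p(ℝ^N)}^p = sup_{λ>0} λ^p 𝓛^{N+1}({(x,R) ∈ ℝ^N × (0,∞) : f^#_{1/R,s}(x) / R^{1/p} > λ}) = lim_{λ→∞} λ^p 𝓛^{N+1}({(x,R) : f^#_{1/R,s}(x) / R^{1/p} > λ}). -/

import Mathlib

open MeasureTheory Filter Set Metric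
open scoped ENNReal Topology Pointwise

noncomputable section


/-- The sharp fractional maximal function `f^#_s` on `ℝ^N`. -/
def fracSharp (N : ℕ) (s : ℝ) (f : EuclideanSpace ℝ (Fin N) → ℝ)
    (x : EuclideanSpace ℝ (Fin N)) : ℝ≥0∞ :=
  ⨆ (r : ℝ) (_ : 0 < r),
    ENNReal.ofReal (r ^ (-(s + N))) *
      ∫⁻ y in Metric.ball x r,
        ENNReal.ofReal |f y - ⨍ z in Metric.ball x r, f z ∂volume| ∂volume

/-- The restricted sharp fractional maximal function `f^#_{R,s}` on `ℝ^N`. -/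
def fracSharpRes (N : ℕ) (s R : ℝ) (f : EuclideanSpace ℝ (Fin N) → ℝ)
    (x : EuclideanSpace ℝ (Fin N)) : ℝ≥0∞ :=
  ⨆ (r : ℝ) (_ : 0 < r) (_ : r < R),
    ENNReal.ofReal (r ^ (-(s + N))) *
      ∫⁻ y in Metric.ball x r,
        ENNReal.ofReal |f y - ⨍ z in Metric.ball x r, f z ∂volume| ∂volume

namespace CSaux

variable {N : ℕ} {s p : ℝ}

/-- single-radius term of the sharp maximal function -/
def T (N : ℕ) (s : ℝ) (f : EuclideanSpace ℝ (Fin N) → ℝ) (r : ℝ)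
    (x : EuclideanSpace ℝ (Fin N)) : ℝ≥0∞ :=
  ENNReal.ofReal (r ^ (-(s + N))) *
    ∫⁻ y in Metric.ball x r,
      ENNReal.ofReal |f y - ⨍ z in Metric.ball x r, f z ∂volume| ∂volume

lemma T_congr {f g : EuclideanSpace ℝ (Fin N) → ℝ} (h : f =ᵐ[volume] g) (r : ℝ)
    (x : EuclideanSpace ℝ (Fin N)) : T N s f r x = T N s g r x := by
  have havg : (⨍ z in Metric.ball x r, f z ∂volume) = ⨍ z in Metric.ball x r, g z ∂volume :=
    average_congr (ae_restrict_of_ae h)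
  unfold T
  rw [havg, lintegral_congr_ae ((ae_restrict_of_ae h).mono fun y hy => by rw [hy])]

/-- Left-continuity of `T` in the radius. -/
lemma T_tendsto (f : EuclideanSpace ℝ (Fin N) → ℝ) (hf : LocallyIntegrable f volume)
    (hmf : Measurable f) (x : EuclideanSpace ℝ (Fin N)) {r : ℝ} (hr : 0 < r) {q : ℕ → ℝ}
    (hmono : Monotone q) (hqr : ∀ n, q n < r) (hql : Tendsto q atTop (𝓝 r)) :
    Tendsto (fun n => T N s f (q n) x) atTop (𝓝 (T N s f r x)) := by
  have hun : (⋃ n, Metric.ball x (q n)) = Metric.ball x r := by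
    apply subset_antisymm
    · exact iUnion_subset fun n => ball_subset_ball (hqr n).le
    · intro y hy
      obtain ⟨n, hn⟩ := (hql.eventually (eventually_gt_nhds (mem_ball.1 hy))).exists
      exact mem_iUnion.2 ⟨n, mem_ball.2 hn⟩
  have hball : Tendsto (fun n => volume (Metric.ball x (q n))) atTop
      (𝓝 (volume (Metric.ball x r))) := by
    have := tendsto_measure_iUnion_atTop (μ := volume)
      (s := fun n => Metric.ball x (q n)) (fun a b hab => ball_subset_ball (hmono hab))
    rwa [hun] at this
  have hvol_ne : volume (Metric.ball x r) ≠ ⊤ := measure_ball_lt_top.ne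
  have hvol_pos : (0:ℝ≥0∞) < volume (Metric.ball x r) := measure_ball_pos volume x hr
  have htoReal : Tendsto (fun n => (volume (Metric.ball x (q n))).toReal) atTop
      (𝓝 (volume (Metric.ball x r)).toReal) := (ENNReal.tendsto_toReal hvol_ne).comp hball
  have hloc : IntegrableOn f (closedBall x r) volume :=
    hf.integrableOn_isCompact (isCompact_closedBall x r)
  have hint : Tendsto (fun n => ∫ y in Metric.ball x (q n), f y) atTop
      (𝓝 (∫ y in Metric.ball x r, f y)) := by
    simp only [← integral_indicator measurableSet_ball]
    refine tendsto_integral_of_dominated_convergence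
      (fun y => ‖(closedBall x r).indicator f y‖)
      (fun n => (hf.aestronglyMeasurable.indicator measurableSet_ball))
      ((hloc.integrable_indicator measurableSet_closedBall).norm) (fun n => ?_) ?_
    · refine Eventually.of_forall fun y => ?_
      show ‖(Metric.ball x (q n)).indicator f y‖ ≤ ‖(closedBall x r).indicator f y‖
      by_cases hy : y ∈ Metric.ball x (q n)
      · have hy' : y ∈ closedBall x r := mem_closedBall.2 ((mem_ball.1 hy).le.trans (hqr n).le)
        rw [indicator_of_mem hy, indicator_of_mem hy']
      · rw [indicator_of_notMem hy]
        simp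
    · refine Eventually.of_forall fun y => ?_
      by_cases hy : y ∈ Metric.ball x r
      · have hev : ∀ᶠ n in atTop, y ∈ Metric.ball x (q n) :=
          (hql.eventually (eventually_gt_nhds (mem_ball.1 hy))).mono fun n hn => mem_ball.2 hn
        rw [indicator_of_mem hy]
        exact Tendsto.congr' (hev.mono fun n hn => (indicator_of_mem hn f).symm)
          tendsto_const_nhds
      · have : ∀ n, (Metric.ball x (q n)).indicator f y = 0 := fun n =>
          indicator_of_notMem (fun hc => hy (ball_subset_ball (hqr n).le hc)) f
        rw [indicator_of_notMem hy]
        simp only [this]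
        exact tendsto_const_nhds
  have hne0 : (volume (Metric.ball x r)).toReal ≠ 0 :=
    ENNReal.toReal_ne_zero.2 ⟨hvol_pos.ne', hvol_ne⟩
  have havg : Tendsto (fun n => ⨍ z in Metric.ball x (q n), f z ∂volume) atTop
      (𝓝 (⨍ z in Metric.ball x r, f z ∂volume)) := by
    simp only [setAverage_eq]
    exact (htoReal.inv₀ hne0).smul hint
  have hlint : Tendsto
      (fun n => ∫⁻ y in Metric.ball x (q n),
        ENNReal.ofReal |f y - ⨍ z in Metric.ball x (q n), f z ∂volume| ∂volume) atTop
      (𝓝 (∫⁻ y in Metric.ball x r,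
        ENNReal.ofReal |f y - ⨍ z in Metric.ball x r, f z ∂volume| ∂volume)) := by
    set c : ℕ → ℝ := fun n => ⨍ z in Metric.ball x (q n), f z ∂volume with hc
    set cr : ℝ := ⨍ z in Metric.ball x r, f z ∂volume with hcr
    set M : ℝ := |cr| + 1 with hM
    simp only [← lintegral_indicator measurableSet_ball]
    refine tendsto_lintegral_filter_of_dominated_convergence
      ((closedBall x r).indicator fun y => ENNReal.ofReal (|f y| + M))
      (Eventually.of_forall fun n => ((ENNReal.measurable_ofReal.comp
        ((hmf.sub measurable_const).abs)).indicator measurableSet_ball)) ?_ ?_ ?_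
    · have hevM : ∀ᶠ n in atTop, |c n| ≤ M := by
        have habs : Tendsto (fun n => |c n|) atTop (𝓝 |cr|) := (continuous_abs.tendsto _).comp havg
        exact habs.eventually (eventually_le_nhds (lt_add_one |cr|))
      refine hevM.mono fun n hn => Eventually.of_forall fun y => ?_
      show (Metric.ball x (q n)).indicator (fun y => ENNReal.ofReal |f y - c n|) y ≤ _
      by_cases hy : y ∈ Metric.ball x (q n)
      · have hy' : y ∈ closedBall x r := mem_closedBall.2 ((mem_ball.1 hy).le.trans (hqr n).le)
        rw [indicator_of_mem hy, indicator_of_mem hy']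
        apply ENNReal.ofReal_le_ofReal
        calc |f y - c n| ≤ |f y| + |c n| := by
              rw [sub_eq_add_neg]
              exact (abs_add_le _ _).trans (by rw [abs_neg])
          _ ≤ |f y| + M := by linarith
      · rw [indicator_of_notMem hy]
        exact zero_le
    · rw [lintegral_indicator measurableSet_closedBall]
      have hsplit : ∀ y : EuclideanSpace ℝ (Fin N),
          ENNReal.ofReal (|f y| + M) = ENNReal.ofReal |f y| + ENNReal.ofReal M := fun y =>
        ENNReal.ofReal_add (abs_nonneg _) (by positivity)
      simp only [hsplit]
      rw [lintegral_add_right _ measurable_const, setLIntegral_const]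
      refine ENNReal.add_ne_top.2 ⟨?_, ENNReal.mul_ne_top ENNReal.ofReal_ne_top
        measure_closedBall_lt_top.ne⟩
      have h2 := (hasFiniteIntegral_iff_norm f).1 hloc.2
      simp only [Real.norm_eq_abs] at h2
      exact h2.ne
    · refine Eventually.of_forall fun y => ?_
      by_cases hy : y ∈ Metric.ball x r
      · have hev : ∀ᶠ n in atTop, y ∈ Metric.ball x (q n) :=
          (hql.eventually (eventually_gt_nhds (mem_ball.1 hy))).mono fun n hn => mem_ball.2 hn
        rw [indicator_of_mem hy]
        have hten : Tendsto (fun n => ENNReal.ofReal |f y - c n|) atTop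
            (𝓝 (ENNReal.ofReal |f y - cr|)) :=
          (ENNReal.continuous_ofReal.tendsto _).comp
            ((continuous_abs.tendsto _).comp (tendsto_const_nhds.sub havg))
        exact Tendsto.congr' (hev.mono fun n hn => by simp [hc, indicator_of_mem hn]) hten
      · have hnot : ∀ n, (Metric.ball x (q n)).indicator
            (fun y => ENNReal.ofReal |f y - c n|) y = 0 := fun n =>
          indicator_of_notMem (fun hcmem => hy (ball_subset_ball (hqr n).le hcmem)) _
        rw [indicator_of_notMem hy]
        exact tendsto_const_nhds.congr fun n => (hnot n).symm
  have hcoef : Tendsto (fun n => ENNReal.ofReal ((q n) ^ (-(s + (N:ℝ))))) atTop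
      (𝓝 (ENNReal.ofReal (r ^ (-(s + (N:ℝ)))))) :=
    (ENNReal.continuous_ofReal.tendsto _).comp
      ((Real.continuousAt_rpow_const r _ (Or.inl hr.ne')).tendsto.comp hql)
  exact ENNReal.Tendsto.mul hcoef
    (Or.inl (ENNReal.ofReal_pos.2 (Real.rpow_pos_of_pos hr _)).ne') hlint
    (Or.inr ENNReal.ofReal_ne_top)

lemma T_le_qsup (f : EuclideanSpace ℝ (Fin N) → ℝ) (hf : LocallyIntegrable f volume)
    (hmf : Measurable f) (x : EuclideanSpace ℝ (Fin N)) {r : ℝ} (hr : 0 < r) :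
    T N s f r x ≤ ⨆ (j : ℚ) (_ : 0 < (j:ℝ)) (_ : (j:ℝ) < r), T N s f (j:ℝ) x := by
  set a : ℕ → ℝ := fun n => r * ((n+1)/(n+2)) with ha
  have ha_pos : ∀ n, 0 < a n := fun n => by positivity
  have ha_lt : ∀ n, a n < a (n+1) := by
    intro n
    apply mul_lt_mul_of_pos_left _ hr
    rw [div_lt_div_iff₀ (by positivity) (by positivity)]
    push_cast
    nlinarith [Nat.cast_nonneg (α := ℝ) n]
  have ha_le : ∀ n, a n ≤ r := by
    intro n
    have : ((n:ℝ)+1)/((n:ℝ)+2) ≤ 1 := by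
      rw [div_le_one (by positivity)]; linarith
    calc a n ≤ r * 1 := mul_le_mul_of_nonneg_left this hr.le
      _ = r := mul_one r
  have ha_tend : Tendsto a atTop (𝓝 r) := by
    have h1 : Tendsto (fun n : ℕ => r / ((n:ℝ)+2)) atTop (𝓝 0) := by
      have := (tendsto_const_div_atTop_nhds_zero_nat r).comp (tendsto_add_atTop_nat 2)
      refine this.congr fun n => ?_
      simp [Function.comp]
    have h2 : ∀ n : ℕ, a n = r - r / ((n:ℝ)+2) := by
      intro n
      rw [ha]
      field_simp
      ring
    have haeq : a = fun n : ℕ => r - r / ((n:ℝ)+2) := funext h2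
    rw [haeq]
    simpa using tendsto_const_nhds.sub h1
  choose j hj1 hj2 using fun n => exists_rat_btwn (ha_lt n)
  have h0 : ∀ n, 0 < ((j n : ℚ) : ℝ) := fun n => (ha_pos n).trans (hj1 n)
  have hlt : ∀ n, ((j n : ℚ) : ℝ) < r := fun n => (hj2 n).trans_le (ha_le (n+1))
  have hmono : Monotone fun n => ((j n : ℚ) : ℝ) :=
    monotone_nat_of_le_succ fun n => ((hj2 n).trans (hj1 (n+1))).le
  have hten : Tendsto (fun n => ((j n : ℚ) : ℝ)) atTop (𝓝 r) :=
    tendsto_of_tendsto_of_tendsto_of_le_of_le ha_tend (ha_tend.comp (tendsto_add_atTop_nat 1))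
      (fun n => (hj1 n).le) (fun n => (hj2 n).le)
  have htd := T_tendsto (s := s) f hf hmf x hr hmono hlt hten
  refine le_of_tendsto htd (Eventually.of_forall fun n => ?_)
  exact le_iSup_of_le (j n) (le_iSup_of_le (h0 n) (le_iSup_of_le (hlt n) le_rfl))

lemma fracSharp_def (f : EuclideanSpace ℝ (Fin N) → ℝ) (x : EuclideanSpace ℝ (Fin N)) :
    fracSharp N s f x = ⨆ (r : ℝ) (_ : 0 < r), T N s f r x := rfl

lemma fracSharpRes_def (u : ℝ) (f : EuclideanSpace ℝ (Fin N) → ℝ)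
    (x : EuclideanSpace ℝ (Fin N)) :
    fracSharpRes N s u f x = ⨆ (r : ℝ) (_ : 0 < r) (_ : r < u), T N s f r x := rfl

lemma fracSharp_eq (f : EuclideanSpace ℝ (Fin N) → ℝ) (hf : LocallyIntegrable f volume)
    (hmf : Measurable f) (x : EuclideanSpace ℝ (Fin N)) :
    fracSharp N s f x = ⨆ (j : ℚ) (_ : 0 < (j:ℝ)), T N s f (j:ℝ) x := by
  rw [fracSharp_def]
  apply le_antisymm
  · refine iSup_le fun r => iSup_le fun hr => ?_
    refine (T_le_qsup f hf hmf x hr).trans ?_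
    exact iSup_le fun jj => iSup_le fun h1 => iSup_le fun _ =>
      le_iSup_of_le jj (le_iSup_of_le h1 le_rfl)
  · exact iSup_le fun j => iSup_le fun h1 =>
      le_iSup_of_le (j:ℝ) (le_iSup_of_le h1 le_rfl)

lemma fracSharpRes_eq (u : ℝ) (f : EuclideanSpace ℝ (Fin N) → ℝ)
    (hf : LocallyIntegrable f volume) (hmf : Measurable f) (x : EuclideanSpace ℝ (Fin N)) :
    fracSharpRes N s u f x = ⨆ (j : ℚ) (_ : 0 < (j:ℝ)) (_ : (j:ℝ) < u), T N s f (j:ℝ) x := by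
  rw [fracSharpRes_def]
  apply le_antisymm
  · refine iSup_le fun r => iSup_le fun hr => iSup_le fun hru => ?_
    refine (T_le_qsup f hf hmf x hr).trans ?_
    exact iSup_le fun jj => iSup_le fun h1 => iSup_le fun h2 =>
      le_iSup_of_le jj (le_iSup_of_le h1 (le_iSup_of_le (h2.trans hru) le_rfl))
  · exact iSup_le fun j => iSup_le fun h1 => iSup_le fun h2 =>
      le_iSup_of_le (j:ℝ) (le_iSup_of_le h1 (le_iSup_of_le h2 le_rfl))

lemma fracSharp_congr {f g : EuclideanSpace ℝ (Fin N) → ℝ} (h : f =ᵐ[volume] g)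
    (x : EuclideanSpace ℝ (Fin N)) : fracSharp N s f x = fracSharp N s g x := by
  rw [fracSharp_def, fracSharp_def]
  exact iSup_congr fun r => iSup_congr fun _ => T_congr h r x

lemma fracSharpRes_congr {f g : EuclideanSpace ℝ (Fin N) → ℝ} (h : f =ᵐ[volume] g) (u : ℝ)
    (x : EuclideanSpace ℝ (Fin N)) : fracSharpRes N s u f x = fracSharpRes N s u g x := by
  rw [fracSharpRes_def, fracSharpRes_def]
  exact iSup_congr fun r => iSup_congr fun _ => iSup_congr fun _ => T_congr h r x

lemma measurable_avg (f : EuclideanSpace ℝ (Fin N) → ℝ) (hmf : Measurable f) (q : ℝ) :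
    Measurable fun x : EuclideanSpace ℝ (Fin N) => ⨍ z in Metric.ball x q, f z ∂volume := by
  have hSopen : IsOpen {p : EuclideanSpace ℝ (Fin N) × EuclideanSpace ℝ (Fin N) |
      dist p.2 p.1 < q} :=
    isOpen_lt (continuous_dist.comp (continuous_snd.prodMk continuous_fst)) continuous_const
  have hG : StronglyMeasurable fun z : EuclideanSpace ℝ (Fin N) × EuclideanSpace ℝ (Fin N) =>
      ({p : EuclideanSpace ℝ (Fin N) × EuclideanSpace ℝ (Fin N) | dist p.2 p.1 < q}).indicator
        (fun p => f p.2) z :=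
    ((hmf.comp measurable_snd).indicator hSopen.measurableSet).stronglyMeasurable
  have hI : Measurable fun x : EuclideanSpace ℝ (Fin N) => ∫ z in Metric.ball x q, f z :=
    by
    have h1 := hG.integral_prod_right' (ν := volume)
    have h2 : ∀ x : EuclideanSpace ℝ (Fin N),
        (∫ y, ({p : EuclideanSpace ℝ (Fin N) × EuclideanSpace ℝ (Fin N) |
          dist p.2 p.1 < q}).indicator (fun p => f p.2) (x, y) ∂volume)
          = ∫ z in Metric.ball x q, f z := by
      intro x
      rw [← integral_indicator measurableSet_ball]
      refine integral_congr_ae (Eventually.of_forall fun y => ?_)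
      simp [Set.indicator, Metric.mem_ball]
    have := h1.measurable
    simpa only [h2] using this
  have hvol : ∀ x : EuclideanSpace ℝ (Fin N),
      volume (Metric.ball x q) = volume (Metric.ball (0 : EuclideanSpace ℝ (Fin N)) q) :=
    fun x => Measure.addHaar_ball_center volume x q
  simp only [setAverage_eq, measureReal_def, hvol, smul_eq_mul]
  exact hI.const_mul _

lemma measurable_T (f : EuclideanSpace ℝ (Fin N) → ℝ) (hmf : Measurable f) (q : ℝ) :
    Measurable fun x : EuclideanSpace ℝ (Fin N) => T N s f q x := by
  have havg := measurable_avg f hmf q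
  have hSopen : IsOpen {p : EuclideanSpace ℝ (Fin N) × EuclideanSpace ℝ (Fin N) |
      dist p.2 p.1 < q} :=
    isOpen_lt (continuous_dist.comp (continuous_snd.prodMk continuous_fst)) continuous_const
  have hK : Measurable fun z : EuclideanSpace ℝ (Fin N) × EuclideanSpace ℝ (Fin N) =>
      ({p : EuclideanSpace ℝ (Fin N) × EuclideanSpace ℝ (Fin N) | dist p.2 p.1 < q}).indicator
        (fun p => ENNReal.ofReal |f p.2 - ⨍ z in Metric.ball p.1 q, f z ∂volume|) z :=
    (ENNReal.measurable_ofReal.comp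
      (((hmf.comp measurable_snd).sub (havg.comp measurable_fst)).abs)).indicator
      hSopen.measurableSet
  have hL := hK.lintegral_prod_right' (ν := volume)
  have h2 : ∀ x : EuclideanSpace ℝ (Fin N),
      (∫⁻ y, ({p : EuclideanSpace ℝ (Fin N) × EuclideanSpace ℝ (Fin N) |
        dist p.2 p.1 < q}).indicator
        (fun p => ENNReal.ofReal |f p.2 - ⨍ z in Metric.ball p.1 q, f z ∂volume|) (x, y) ∂volume)
        = ∫⁻ y in Metric.ball x q,
            ENNReal.ofReal |f y - ⨍ z in Metric.ball x q, f z ∂volume| ∂volume := by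
    intro x
    rw [← lintegral_indicator measurableSet_ball]
    refine lintegral_congr fun y => ?_
    simp [Set.indicator, Metric.mem_ball]
  simp only [h2] at hL
  exact measurable_const.mul hL

lemma collapse_rpow {t : ℝ} (ht : 0 ≤ t) (hp : p ≠ 0) : (t ^ p) ^ (1/p) = t := by
  rw [← Real.rpow_mul ht, mul_one_div_cancel hp, Real.rpow_one]

lemma collapse_rpow' {t : ℝ} (ht : 0 ≤ t) (hp : p ≠ 0) : (t ^ (1/p)) ^ p = t := by
  rw [← Real.rpow_mul ht, one_div_mul_cancel hp, Real.rpow_one]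

lemma mono_aux (hp : 1 < p) (H : ℝ → ℝ≥0∞)
    (hH : ∀ ⦃R R' : ℝ⦄, 0 < R → R ≤ R' → H R' ≤ H R)
    {l l' : ℝ} (hl : 0 < l) (hll : l ≤ l') :
    ENNReal.ofReal (l ^ p) *
        volume {R : ℝ | 0 < R ∧ ENNReal.ofReal (l * R ^ (1/p)) < H R}
      ≤ ENNReal.ofReal (l' ^ p) *
        volume {R : ℝ | 0 < R ∧ ENNReal.ofReal (l' * R ^ (1/p)) < H R} := by
  have hp0 : (0:ℝ) < p := lt_trans one_pos hp
  have hl' : 0 < l' := lt_of_lt_of_le hl hll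
  set c : ℝ := (l / l') ^ p with hcdef
  have hc0 : 0 < c := Real.rpow_pos_of_pos (div_pos hl hl') p
  have hc1 : c ≤ 1 := Real.rpow_le_one (div_pos hl hl').le ((div_le_one hl').2 hll) hp0.le
  have hsub : (c • {R : ℝ | 0 < R ∧ ENNReal.ofReal (l * R ^ (1/p)) < H R} : Set ℝ)
      ⊆ {R : ℝ | 0 < R ∧ ENNReal.ofReal (l' * R ^ (1/p)) < H R} := by
    rintro z hz
    obtain ⟨R, hR, rfl⟩ := Set.mem_smul_set.1 hz
    obtain ⟨hR0, hRlt⟩ := hR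
    have hcR0 : 0 < c • R := by
      simpa [smul_eq_mul] using mul_pos hc0 hR0
    refine ⟨hcR0, ?_⟩
    have hkey : l' * (c • R) ^ (1/p) = l * R ^ (1/p) := by
      have h1 : (c * R) ^ (1/p) = c ^ (1/p) * R ^ (1/p) := Real.mul_rpow hc0.le hR0.le
      have h2 : c ^ (1/p) = l / l' := by
        rw [hcdef, collapse_rpow (div_pos hl hl').le hp0.ne']
      rw [smul_eq_mul, h1, h2]
      field_simp
    rw [hkey]
    refine lt_of_lt_of_le hRlt (hH hcR0 ?_)
    calc c • R = c * R := smul_eq_mul c R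
      _ ≤ 1 * R := mul_le_mul_of_nonneg_right hc1 hR0.le
      _ = R := one_mul R
  have hscale : volume ((c • {R : ℝ | 0 < R ∧ ENNReal.ofReal (l * R ^ (1/p)) < H R} : Set ℝ))
      = ENNReal.ofReal c *
        volume {R : ℝ | 0 < R ∧ ENNReal.ofReal (l * R ^ (1/p)) < H R} := by
    rw [Measure.addHaar_smul volume]
    congr 2
    simp [abs_of_pos hc0]
  have harith : ENNReal.ofReal (l ^ p) = ENNReal.ofReal (l' ^ p) * ENNReal.ofReal c := by
    rw [← ENNReal.ofReal_mul (by positivity)]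
    congr 1
    rw [hcdef, ← Real.mul_rpow hl'.le (div_pos hl hl').le, mul_div_cancel₀ _ hl'.ne']
  calc ENNReal.ofReal (l ^ p) * volume {R : ℝ | 0 < R ∧ ENNReal.ofReal (l * R ^ (1/p)) < H R}
      = ENNReal.ofReal (l' ^ p) *
        volume ((c • {R : ℝ | 0 < R ∧ ENNReal.ofReal (l * R ^ (1/p)) < H R} : Set ℝ)) := by
        rw [hscale, harith, mul_assoc]
    _ ≤ _ := mul_le_mul_right (measure_mono hsub) _

lemma sup_aux (hp : 1 < p) (H : ℝ → ℝ≥0∞)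
    (hH : ∀ ⦃R R' : ℝ⦄, 0 < R → R ≤ R' → H R' ≤ H R) (F : ℝ≥0∞)
    (hF : (⨆ (R : ℝ) (_ : 0 < R), H R) = F) :
    (⨆ (l : ℝ) (_ : 0 < l), ENNReal.ofReal (l ^ p) *
        volume {R : ℝ | 0 < R ∧ ENNReal.ofReal (l * R ^ (1/p)) < H R}) = F ^ p := by
  have hp0 : (0:ℝ) < p := lt_trans one_pos hp
  apply le_antisymm
  · refine iSup_le fun l => iSup_le fun hl => ?_
    by_cases hFtop : F = ⊤
    · rw [hFtop, ENNReal.top_rpow_of_pos hp0]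
      exact le_top
    have hsub : {R : ℝ | 0 < R ∧ ENNReal.ofReal (l * R ^ (1/p)) < H R}
        ⊆ Ioo 0 ((F.toReal / l) ^ p) := by
      rintro R ⟨hR0, hlt⟩
      refine ⟨hR0, ?_⟩
      have h1 : ENNReal.ofReal (l * R ^ (1/p)) < F := by
        refine lt_of_lt_of_le hlt ?_
        rw [← hF]
        exact le_iSup_of_le R (le_iSup_of_le hR0 le_rfl)
      have h2 : l * R ^ (1/p) < F.toReal := by
        rw [← ENNReal.ofReal_toReal hFtop, ENNReal.ofReal_lt_ofReal_iff_of_nonneg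
          (by positivity)] at h1
        exact h1
      have h3 : R ^ (1/p) < F.toReal / l := (lt_div_iff₀' hl).2 h2
      calc R = (R ^ (1/p)) ^ p := (collapse_rpow' hR0.le hp0.ne').symm
        _ < (F.toReal / l) ^ p := Real.rpow_lt_rpow (Real.rpow_nonneg hR0.le _) h3 hp0
    have hvol : volume {R : ℝ | 0 < R ∧ ENNReal.ofReal (l * R ^ (1/p)) < H R}
        ≤ ENNReal.ofReal ((F.toReal / l) ^ p) := by
      refine le_trans (measure_mono hsub) ?_
      rw [Real.volume_Ioo]
      simp
    calc ENNReal.ofReal (l ^ p) * volume {R : ℝ | 0 < R ∧ ENNReal.ofReal (l * R ^ (1/p)) < H R}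
        ≤ ENNReal.ofReal (l ^ p) * ENNReal.ofReal ((F.toReal / l) ^ p) :=
          mul_le_mul_right hvol _
      _ = ENNReal.ofReal (F.toReal ^ p) := by
          rw [← ENNReal.ofReal_mul (by positivity), ← Real.mul_rpow hl.le (by positivity),
            mul_div_cancel₀ _ hl.ne']
      _ = F ^ p := by
          rw [← ENNReal.ofReal_rpow_of_nonneg ENNReal.toReal_nonneg hp0.le,
            ENNReal.ofReal_toReal hFtop]
  · refine le_of_forall_lt fun b hb => ?_
    have hb' : b ^ (1/p) < F := by
      have := ENNReal.rpow_lt_rpow hb (by positivity : (0:ℝ) < 1/p)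
      rwa [← ENNReal.rpow_mul, mul_one_div_cancel hp0.ne', ENNReal.rpow_one] at this
    rw [← hF] at hb'
    obtain ⟨R₀, hR₀, hlt⟩ : ∃ R₀ : ℝ, 0 < R₀ ∧ b ^ (1/p) < H R₀ := by
      simpa [lt_iSup_iff] using hb'
    obtain ⟨cc, _, hbc, hcH⟩ := ENNReal.lt_iff_exists_real_btwn.1 hlt
    have hc : 0 < cc := ENNReal.ofReal_pos.1 (lt_of_le_of_lt zero_le hbc)
    set l : ℝ := max (cc / R₀ ^ (1/p)) 1 with hldef
    have hl : 0 < l := lt_of_lt_of_le one_pos (le_max_right _ _)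
    have hsub : Ioo (0:ℝ) ((cc/l) ^ p)
        ⊆ {R : ℝ | 0 < R ∧ ENNReal.ofReal (l * R ^ (1/p)) < H R} := by
      rintro R ⟨h0, hRlt⟩
      refine ⟨h0, ?_⟩
      have h1 : R ^ (1/p) < cc / l := by
        have := Real.rpow_lt_rpow h0.le hRlt (by positivity : (0:ℝ) < 1/p)
        rwa [collapse_rpow (by positivity) hp0.ne'] at this
      have h2 : l * R ^ (1/p) < cc := by
        rw [mul_comm]
        exact (lt_div_iff₀ hl).1 h1
      have hcl : cc / l ≤ R₀ ^ (1/p) := by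
        rw [div_le_iff₀ hl]
        calc cc = cc / R₀ ^ (1/p) * R₀ ^ (1/p) := by
              field_simp
          _ ≤ l * R₀ ^ (1/p) := by
              have := Real.rpow_pos_of_pos hR₀ (1/p)
              exact mul_le_mul_of_nonneg_right (le_max_left _ _) this.le
          _ = R₀ ^ (1/p) * l := mul_comm _ _
      have hRR0 : R ≤ R₀ := by
        refine le_of_lt (lt_of_lt_of_le hRlt ?_)
        calc (cc/l) ^ p ≤ (R₀ ^ (1/p)) ^ p :=
              Real.rpow_le_rpow (by positivity) hcl hp0.le
          _ = R₀ := collapse_rpow' hR₀.le hp0.ne'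
      calc ENNReal.ofReal (l * R ^ (1/p)) < ENNReal.ofReal cc :=
            (ENNReal.ofReal_lt_ofReal_iff hc).2 h2
        _ < H R₀ := hcH
        _ ≤ H R := hH h0 hRR0
    have hvol : ENNReal.ofReal ((cc/l) ^ p)
        ≤ volume {R : ℝ | 0 < R ∧ ENNReal.ofReal (l * R ^ (1/p)) < H R} := by
      refine le_trans ?_ (measure_mono hsub)
      rw [Real.volume_Ioo]
      simp
    have hfinal : ENNReal.ofReal (cc ^ p)
        ≤ ENNReal.ofReal (l ^ p) *
          volume {R : ℝ | 0 < R ∧ ENNReal.ofReal (l * R ^ (1/p)) < H R} := by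
      refine le_trans ?_ (mul_le_mul_right hvol _)
      rw [← ENNReal.ofReal_mul (by positivity), ← Real.mul_rpow hl.le (by positivity),
        mul_div_cancel₀ _ hl.ne']
    have hblt : b < ENNReal.ofReal (cc ^ p) := by
      have := ENNReal.rpow_lt_rpow hbc hp0
      rwa [← ENNReal.rpow_mul, one_div_mul_cancel hp0.ne', ENNReal.rpow_one,
        ENNReal.ofReal_rpow_of_pos hc] at this
    exact lt_of_lt_of_le hblt (le_trans hfinal
      (le_iSup_of_le l (le_iSup_of_le hl le_rfl)))

lemma isup_pos_nat {φ : ℝ → ℝ≥0∞} (hm : ∀ ⦃l l' : ℝ⦄, 0 < l → l ≤ l' → φ l ≤ φ l') :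
    (⨆ (l : ℝ) (_ : 0 < l), φ l) = ⨆ n : ℕ, φ ((n:ℝ) + 1) := by
  apply le_antisymm
  · refine iSup_le fun l => iSup_le fun hl => ?_
    obtain ⟨n, hn⟩ := exists_nat_ge l
    exact (hm hl (hn.trans (by linarith))).trans (le_iSup (fun n : ℕ => φ ((n:ℝ)+1)) n)
  · exact iSup_le fun n => le_iSup_of_le ((n:ℝ)+1) (le_iSup_of_le (by positivity) le_rfl)

lemma tendsto_of_mono_pos {φ : ℝ → ℝ≥0∞} (hm : ∀ ⦃l l' : ℝ⦄, 0 < l → l ≤ l' → φ l ≤ φ l') :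
    Tendsto φ atTop (𝓝 (⨆ (l : ℝ) (_ : 0 < l), φ l)) := by
  have hψ : Monotone fun l : ℝ => φ (max l 1) := fun a b hab =>
    hm (lt_of_lt_of_le one_pos (le_max_right _ _)) (max_le_max hab le_rfl)
  have h1 := tendsto_atTop_iSup hψ
  have h2 : (⨆ l : ℝ, φ (max l 1)) = ⨆ (l : ℝ) (_ : 0 < l), φ l := by
    apply le_antisymm
    · refine iSup_le fun l => ?_
      exact le_iSup_of_le (max l 1) (le_iSup_of_le (lt_of_lt_of_le one_pos (le_max_right _ _))
        le_rfl)
    · exact iSup_le fun l => iSup_le fun hl =>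
        (hm hl (le_max_left l 1)).trans (le_iSup (fun l : ℝ => φ (max l 1)) l)
  rw [h2] at h1
  exact Tendsto.congr' ((eventually_ge_atTop (1:ℝ)).mono fun l hl => by rw [max_eq_left hl]) h1

end CSaux

open CSaux in
/-- Characterization of the Calderón–Campanato norm via restricted sharp maximal functions. -/
theorem campanato_restricted_sharp_characterization
    (N : ℕ) (p s : ℝ) (hp : 1 < p) (hs : s ∈ Set.Icc (0 : ℝ) 1)
    (f : EuclideanSpace ℝ (Fin N) → ℝ) (hf : LocallyIntegrable f volume) :
    (⨆ (l : ℝ) (_ : 0 < l), ENNReal.ofReal (l ^ p) *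
        (volume.prod (volume.restrict (Set.Ioi (0 : ℝ))))
          {q : EuclideanSpace ℝ (Fin N) × ℝ |
            0 < q.2 ∧ ENNReal.ofReal (l * q.2 ^ (1 / p)) < fracSharpRes N s (1 / q.2) f q.1})
      = ∫⁻ x, (fracSharp N s f x) ^ p ∧
    Tendsto (fun l : ℝ => ENNReal.ofReal (l ^ p) *
        (volume.prod (volume.restrict (Set.Ioi (0 : ℝ))))
          {q : EuclideanSpace ℝ (Fin N) × ℝ |
            0 < q.2 ∧ ENNReal.ofReal (l * q.2 ^ (1 / p)) < fracSharpRes N s (1 / q.2) f q.1})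
      atTop (nhds (∫⁻ x, (fracSharp N s f x) ^ p)) := by
  classical
  obtain ⟨g, hgsm, hfg⟩ := hf.aestronglyMeasurable
  have hmg : Measurable g := hgsm.measurable
  have hg : LocallyIntegrable g volume := by
    intro x
    obtain ⟨u, hu, hint⟩ := hf x
    exact ⟨u, hu, hint.congr (ae_restrict_of_ae hfg)⟩
  have hp0 : (0:ℝ) < p := lt_trans one_pos hp
  simp only [fracSharpRes_congr (s := s) hfg, fracSharp_congr (s := s) hfg]
  set ν := volume.restrict (Set.Ioi (0:ℝ)) with hν
  set Φ : ℝ → ℝ≥0∞ := fun l => ENNReal.ofReal (l ^ p) *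
      (volume.prod ν)
        {q : EuclideanSpace ℝ (Fin N) × ℝ |
          0 < q.2 ∧ ENNReal.ofReal (l * q.2 ^ (1 / p)) < fracSharpRes N s (1 / q.2) g q.1}
    with hΦ
  have hmemS : ∀ (a : ℝ≥0∞) (u : ℝ) x, (a < fracSharpRes N s u g x) ↔
      ∃ j : ℚ, 0 < (j:ℝ) ∧ (j:ℝ) < u ∧ a < T N s g (j:ℝ) x := by
    intro a u x
    rw [fracSharpRes_eq u g hg hmg x]
    simp only [lt_iSup_iff]
    constructor
    · rintro ⟨j, h1, h2, h3⟩
      exact ⟨j, by exact_mod_cast h1, by exact_mod_cast h2, h3⟩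
    · rintro ⟨j, h1, h2, h3⟩
      exact ⟨j, by exact_mod_cast h1, by exact_mod_cast h2, h3⟩
  have hSmeas : ∀ l : ℝ, MeasurableSet {q : EuclideanSpace ℝ (Fin N) × ℝ |
      0 < q.2 ∧ ENNReal.ofReal (l * q.2 ^ (1 / p)) < fracSharpRes N s (1 / q.2) g q.1} := by
    intro l
    have heq : {q : EuclideanSpace ℝ (Fin N) × ℝ |
        0 < q.2 ∧ ENNReal.ofReal (l * q.2 ^ (1 / p)) < fracSharpRes N s (1 / q.2) g q.1}
        = ⋃ j : ℚ, ({q : EuclideanSpace ℝ (Fin N) × ℝ | 0 < q.2} ∩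
            {q : EuclideanSpace ℝ (Fin N) × ℝ | 0 < (j:ℝ)} ∩
            {q : EuclideanSpace ℝ (Fin N) × ℝ | (j:ℝ) < 1 / q.2} ∩
            {q : EuclideanSpace ℝ (Fin N) × ℝ |
              ENNReal.ofReal (l * q.2 ^ (1 / p)) < T N s g (j:ℝ) q.1}) := by
      ext q
      simp only [mem_setOf_eq, mem_iUnion, mem_inter_iff, hmemS]
      tauto
    rw [heq]
    refine MeasurableSet.iUnion fun j => ?_
    refine MeasurableSet.inter (MeasurableSet.inter (MeasurableSet.inter ?_ ?_) ?_) ?_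
    · exact measurable_snd measurableSet_Ioi
    · by_cases hj : 0 < (j:ℝ) <;> simp [hj]
    · exact (measurable_const.div measurable_snd) measurableSet_Ioi
    · refine measurableSet_lt ?_ ((measurable_T g hmg (j:ℝ)).comp measurable_fst)
      exact ENNReal.measurable_ofReal.comp (measurable_const.mul
        (measurable_snd.pow_const _))
  have hH : ∀ (x : EuclideanSpace ℝ (Fin N)) ⦃R R' : ℝ⦄, 0 < R → R ≤ R' →
      fracSharpRes N s (1/R') g x ≤ fracSharpRes N s (1/R) g x := by
    intro x R R' hR hle
    rw [fracSharpRes_def, fracSharpRes_def]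
    refine iSup_le fun r => iSup_le fun hr => iSup_le fun hru => ?_
    exact le_iSup_of_le r (le_iSup_of_le hr (le_iSup_of_le
      (lt_of_lt_of_le hru (one_div_le_one_div_of_le hR hle)) le_rfl))
  have hFx : ∀ x : EuclideanSpace ℝ (Fin N),
      (⨆ (R : ℝ) (_ : 0 < R), fracSharpRes N s (1/R) g x) = fracSharp N s g x := by
    intro x
    apply le_antisymm
    · refine iSup_le fun R => iSup_le fun hR => ?_
      rw [fracSharpRes_def, fracSharp_def]
      exact iSup_le fun r => iSup_le fun hr => iSup_le fun _ =>
        le_iSup_of_le r (le_iSup_of_le hr le_rfl)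
    · rw [fracSharp_def]
      refine iSup_le fun r => iSup_le fun hr => ?_
      have h1 : T N s g r x ≤ fracSharpRes N s (1/(1/(r+1))) g x := by
        rw [fracSharpRes_def]
        refine le_iSup_of_le r (le_iSup_of_le hr (le_iSup_of_le ?_ le_rfl))
        rw [one_div_one_div]
        linarith
      exact h1.trans (le_iSup_of_le (1/(r+1)) (le_iSup_of_le (by positivity) le_rfl))
  have hslice : ∀ (l : ℝ) (x : EuclideanSpace ℝ (Fin N)),
      ν (Prod.mk x ⁻¹' {q : EuclideanSpace ℝ (Fin N) × ℝ |
        0 < q.2 ∧ ENNReal.ofReal (l * q.2 ^ (1 / p)) < fracSharpRes N s (1 / q.2) g q.1})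
      = volume {R : ℝ | 0 < R ∧
          ENNReal.ofReal (l * R ^ (1 / p)) < fracSharpRes N s (1 / R) g x} := by
    intro l x
    rw [hν, Measure.restrict_apply' measurableSet_Ioi]
    congr 1
    apply inter_eq_self_of_subset_left
    exact fun R hR => hR.1
  have hkey : ∀ l : ℝ, Φ l = ∫⁻ x, ENNReal.ofReal (l ^ p) *
      volume {R : ℝ | 0 < R ∧
        ENNReal.ofReal (l * R ^ (1 / p)) < fracSharpRes N s (1 / R) g x} := by
    intro l
    rw [hΦ]
    simp only
    rw [Measure.prod_apply (hSmeas l), lintegral_congr (hslice l),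
      lintegral_const_mul' _ _ ENNReal.ofReal_ne_top]
  have hmeasA : ∀ l : ℝ, Measurable fun x : EuclideanSpace ℝ (Fin N) =>
      volume {R : ℝ | 0 < R ∧
        ENNReal.ofReal (l * R ^ (1 / p)) < fracSharpRes N s (1 / R) g x} := by
    intro l
    have h1 := measurable_measure_prodMk_left (ν := ν) (hSmeas l)
    have h2 := funext (hslice l)
    rwa [h2] at h1
  have hΦmono : ∀ ⦃l l' : ℝ⦄, 0 < l → l ≤ l' → Φ l ≤ Φ l' := by
    intro l l' hl hll
    rw [hkey l, hkey l']
    exact lintegral_mono fun x => mono_aux hp _ (hH x) hl hll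
  have hsup : (⨆ (l : ℝ) (_ : 0 < l), Φ l) = ∫⁻ x, (fracSharp N s g x) ^ p := by
    rw [isup_pos_nat hΦmono]
    have hmeasn : ∀ n : ℕ, Measurable fun x : EuclideanSpace ℝ (Fin N) =>
        ENNReal.ofReal (((n:ℝ)+1) ^ p) * volume {R : ℝ | 0 < R ∧
          ENNReal.ofReal (((n:ℝ)+1) * R ^ (1 / p)) < fracSharpRes N s (1 / R) g x} :=
      fun n => (hmeasA _).const_mul _
    have hmonon : Monotone fun (n : ℕ) (x : EuclideanSpace ℝ (Fin N)) =>
        ENNReal.ofReal (((n:ℝ)+1) ^ p) * volume {R : ℝ | 0 < R ∧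
          ENNReal.ofReal (((n:ℝ)+1) * R ^ (1 / p)) < fracSharpRes N s (1 / R) g x} :=
      fun n m hnm x => mono_aux hp _ (hH x) (by positivity)
        (add_le_add_left (Nat.cast_le.2 hnm) 1)
    calc (⨆ n : ℕ, Φ ((n:ℝ)+1))
        = ⨆ n : ℕ, ∫⁻ x, ENNReal.ofReal (((n:ℝ)+1) ^ p) * volume {R : ℝ | 0 < R ∧
            ENNReal.ofReal (((n:ℝ)+1) * R ^ (1 / p)) < fracSharpRes N s (1 / R) g x} := by
          exact iSup_congr fun n => hkey _
      _ = ∫⁻ x, ⨆ n : ℕ, ENNReal.ofReal (((n:ℝ)+1) ^ p) * volume {R : ℝ | 0 < R ∧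
            ENNReal.ofReal (((n:ℝ)+1) * R ^ (1 / p)) < fracSharpRes N s (1 / R) g x} :=
          (lintegral_iSup hmeasn hmonon).symm
      _ = ∫⁻ x, (fracSharp N s g x) ^ p := by
          refine lintegral_congr fun x => ?_
          rw [← isup_pos_nat (fun l l' hl hll => mono_aux hp _ (hH x) hl hll)]
          exact sup_aux hp _ (hH x) _ (hFx x)
  refine ⟨hsup, ?_⟩
  have := tendsto_of_mono_pos hΦmono
  rwa [hsup] at this
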